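/- arXiv:1903.10479 — 4 statements merged into one kernel-verified Lean document; each statement's English description precedes it below -/
import Mathlib

section
/- For any finitely generated subgroup G of the additive group of a finite-dimensional real vector space V, the intersection G ∩ V' with any real vector subspace V' of V is a direct-summand subgroup of G. -/
theorem stmt1 {V : Type*} [AddCommGroup V] [Module ℝ V] [FiniteDimensional ℝ V]
    (G : AddSubgroup V) (hG : G.FG) (V' : Submodule ℝ V) :
    ∃ H : AddSubgroup G, IsCompl (V'.toAddSubgroup.comap G.subtype) H := by
  -- view things as ℤ-modules
  have hfin : Module.Finite ℤ G := by
    rw [Module.Finite.iff_addGroup_fg]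
    exact (AddGroup.fg_iff_addSubgroup_fg G).mpr hG
  set N : Submodule ℤ G := AddSubgroup.toIntSubmodule (V'.toAddSubgroup.comap G.subtype) with hN
  have hmemN : ∀ x : G, x ∈ N ↔ (x : V) ∈ V' := fun x => Iff.rfl
  -- the quotient is torsion-free
  have htf : NoZeroSMulDivisors ℤ (G ⧸ N) := by
    refine ⟨fun {n x} h => ?_⟩
    by_cases hn : n = 0
    · exact Or.inl hn
    · refine Or.inr ?_
      obtain ⟨g, rfl⟩ := N.mkQ_surjective x
      rw [← map_zsmul, Submodule.mkQ_apply, Submodule.Quotient.mk_eq_zero] at h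
      rw [Submodule.mkQ_apply, Submodule.Quotient.mk_eq_zero]
      rw [hmemN] at h ⊢
      have : ((n • g : G) : V) = (n : ℝ) • (g : V) := by
        rw [AddSubgroup.coe_zsmul, ← Int.cast_smul_eq_zsmul ℝ]
      rw [this] at h
      have := V'.smul_mem ((n : ℝ)⁻¹) h
      rwa [inv_smul_smul₀ (by exact_mod_cast hn)] at this
  have : Module.Finite ℤ (G ⧸ N) := Module.Finite.quotient ℤ N
  have hfree : Module.Free ℤ (G ⧸ N) := Module.free_of_finite_type_torsion_free'
  have hproj : Module.Projective ℤ (G ⧸ N) := Module.Projective.of_free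
  -- split the quotient map
  obtain ⟨s, hs⟩ := Module.projective_lifting_property N.mkQ (LinearMap.id) N.mkQ_surjective
  have hs' : ∀ y, N.mkQ (s y) = y := fun y => congrFun (congrArg DFunLike.coe hs) y
  -- N and range s are complementary
  have hcompl : IsCompl N (LinearMap.range s) := by
    constructor
    · rw [disjoint_iff]
      ext x
      simp only [Submodule.mem_inf, Submodule.mem_bot, LinearMap.mem_range]
      constructor
      · rintro ⟨hxN, y, rfl⟩
        have : y = 0 := by
          have h2 := hs' y
          rw [Submodule.mkQ_apply] at h2
          rw [← h2, Submodule.Quotient.mk_eq_zero]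
          exact hxN
        rw [this, map_zero]
      · rintro rfl
        exact ⟨N.zero_mem, 0, map_zero s⟩
    · rw [codisjoint_iff, eq_top_iff]
      intro x _
      have hx : x - s (N.mkQ x) ∈ N := by
        rw [← Submodule.Quotient.mk_eq_zero, ← Submodule.mkQ_apply, map_sub, hs', sub_self]
      have : x = (x - s (N.mkQ x)) + s (N.mkQ x) := by abel
      rw [this]
      exact Submodule.add_mem_sup hx ⟨N.mkQ x, rfl⟩
  refine ⟨(LinearMap.range s).toAddSubgroup, ?_⟩
  have := (AddSubgroup.toIntSubmodule (M := G)).symm.isCompl hcompl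
  exact this
end

section
/- Let L be a lattice in a finite-dimensional real vector space V (a subgroup generated by an ℝ-basis of V) and let V' be a vector subspace of V. Then the quotient torus V/L contains the image of V' as a compact subset if and only if V' is spanned by L ∩ V'. -/
open Submodule Set

theorem stmt5 {V : Type*} [NormedAddCommGroup V] [NormedSpace ℝ V] [FiniteDimensional ℝ V]
    (L : AddSubgroup V)
    (hL : ∃ b : Module.Basis (Fin (Module.finrank ℝ V)) ℝ V,
      L = AddSubgroup.closure (Set.range ⇑b))
    (V' : Submodule ℝ V) :
    IsCompact ((QuotientAddGroup.mk : V → V ⧸ L) '' (V' : Set V)) ↔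
      V' = Submodule.span ℝ ((L : Set V) ∩ (V' : Set V)) := by
  obtain ⟨b, rfl⟩ := hL
  rw [← Submodule.span_int_eq_addSubgroupClosure]
  set Lℤ : Submodule ℤ V := Submodule.span ℤ (Set.range ⇑b) with hLℤ
  set L : AddSubgroup V := Lℤ.toAddSubgroup with hLdef
  haveI hLd : DiscreteTopology L := inferInstanceAs (DiscreteTopology Lℤ)
  haveI hLc : IsClosed (L : Set V) := AddSubgroup.isClosed_of_discrete
  constructor
  · -- forward direction
    intro hK
    by_contra hne
    have hle : Submodule.span ℝ ((L : Set V) ∩ (V' : Set V)) ≤ V' :=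
      Submodule.span_le.mpr fun x hx => hx.2
    obtain ⟨v₀, hv₀V, hv₀W⟩ :
        ∃ v₀ ∈ V', v₀ ∉ Submodule.span ℝ ((L : Set V) ∩ (V' : Set V)) := by
      by_contra h
      push_neg at h
      exact hne (le_antisymm (fun x hx => h x hx) hle)
    set W : Submodule ℝ ↥V' := (Submodule.span ℝ ((L : Set V) ∩ (V' : Set V))).comap V'.subtype
      with hWdef
    set w₀ : ↥V' := ⟨v₀, hv₀V⟩ with hw₀def
    have hw₀ : w₀ ∉ W := hv₀W
    obtain ⟨f, hf0, hfW⟩ := W.exists_dual_map_eq_bot_of_notMem hw₀ inferInstance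
    set g : ↥V' →ₗ[ℝ] ℝ := (f w₀)⁻¹ • f with hgdef
    have hg1 : g w₀ = 1 := by simp [hgdef, inv_mul_cancel₀ hf0]
    have hgW : ∀ x ∈ W, g x = 0 := by
      intro x hx
      have : f x ∈ W.map f := Submodule.mem_map_of_mem hx
      rw [hfW, Submodule.mem_bot] at this
      simp [hgdef, this]
    -- the homomorphism from V' to the torus
    set φ : ↥V' →+ V ⧸ L := (QuotientAddGroup.mk' L).comp V'.subtype.toAddMonoidHom with hφdef
    have hφcont : Continuous φ :=
      continuous_quotient_mk'.comp continuous_subtype_val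
    have hrange : (φ.range : Set (V ⧸ L)) = (QuotientAddGroup.mk : V → V ⧸ L) '' (V' : Set V) := by
      ext y
      constructor
      · rintro ⟨x, rfl⟩
        exact ⟨(x : V), x.2, rfl⟩
      · rintro ⟨x, hx, rfl⟩
        exact ⟨⟨x, hx⟩, rfl⟩
    haveI hHc : CompactSpace ↥φ.range := isCompact_iff_compactSpace.mp (hrange ▸ hK)
    set φ' : ↥V' →+ ↥φ.range := φ.rangeRestrict with hφ'def
    have hφ'cont : Continuous φ' := hφcont.subtype_mk _
    have hφ'surj : Function.Surjective φ' := φ.rangeRestrict_surjective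
    have hopen : IsOpenMap φ' := AddMonoidHom.isOpenMap_of_sigmaCompact φ' hφ'surj hφ'cont
    have hquot := hopen.isQuotientMap hφ'cont hφ'surj
    have hker : ∀ x : ↥V', φ' x = 0 → g x = 0 := by
      intro x hx
      have hx' : φ x = 0 := by
        have := congrArg (Subtype.val) hx
        rwa [AddMonoidHom.coe_rangeRestrict] at this
      have hxL : (x : V) ∈ L := by
        rwa [hφdef, AddMonoidHom.comp_apply, QuotientAddGroup.mk'_apply,
          QuotientAddGroup.eq_zero_iff] at hx'
      exact hgW x (Submodule.subset_span ⟨hxL, x.2⟩)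
    set h : ↥φ.range → ℝ := fun y => g (Function.surjInv hφ'surj y) with hhdef
    have hcomm : ∀ x : ↥V', h (φ' x) = g x := by
      intro x
      have h0 : φ' (Function.surjInv hφ'surj (φ' x) - x) = 0 := by
        rw [map_sub, Function.surjInv_eq hφ'surj, sub_self]
      have := hker _ h0
      rw [map_sub, sub_eq_zero] at this
      exact this
    have hhcont : Continuous h := by
      rw [hquot.continuous_iff]
      have : h ∘ φ' = g := funext hcomm
      rw [this]
      exact g.continuous_of_finiteDimensional
    have hcomp : IsCompact (Set.range h) := isCompact_range hhcont
    have hsurj : Function.Surjective h := by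
      intro r
      refine ⟨φ' (r • w₀), ?_⟩
      rw [hcomm, map_smul, hg1, smul_eq_mul, mul_one]
    rw [hsurj.range_eq] at hcomp
    exact NoncompactSpace.noncompact_univ (X := ℝ) hcomp
  · -- reverse direction
    intro hV'
    set Λ : Submodule ℤ ↥V' := Lℤ.comap (V'.subtype.restrictScalars ℤ) with hΛdef
    haveI : DiscreteTopology ↥(Lℤ : Set V) := inferInstanceAs (DiscreteTopology Lℤ)
    haveI hΛd : DiscreteTopology Λ :=
      DiscreteTopology.preimage_of_continuous_injective (Lℤ : Set V)
        V'.subtype.continuous_of_finiteDimensional (Submodule.injective_subtype V')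
    have himg : V'.subtype '' (Λ : Set ↥V') = (L : Set V) ∩ (V' : Set V) := by
      ext x
      constructor
      · rintro ⟨y, hy, rfl⟩
        exact ⟨hy, y.2⟩
      · rintro ⟨hxL, hxV⟩
        exact ⟨⟨x, hxV⟩, hxL, rfl⟩
    have hspan : Submodule.span ℝ (Λ : Set ↥V') = ⊤ := by
      apply Submodule.map_injective_of_injective (Submodule.injective_subtype V')
      rw [Submodule.map_span, himg, Submodule.map_top, Submodule.range_subtype, ← hV']
    haveI : IsZLattice ℝ Λ := ⟨hspan⟩
    set b' : Module.Basis (Module.Free.ChooseBasisIndex ℤ ↥Λ) ℤ ↥Λ := Module.Free.chooseBasis ℤ ↥Λ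
      with hb'def
    set bR := b'.ofZLatticeBasis ℝ Λ with hbRdef
    have hFb : Bornology.IsBounded (ZSpan.fundamentalDomain bR) :=
      ZSpan.fundamentalDomain_isBounded bR
    have hC : IsCompact (closure (ZSpan.fundamentalDomain bR)) :=
      Metric.isCompact_of_isClosed_isBounded isClosed_closure hFb.closure
    have hCc : IsCompact (V'.subtype '' closure (ZSpan.fundamentalDomain bR)) :=
      hC.image V'.subtype.continuous_of_finiteDimensional
    have hEq : (QuotientAddGroup.mk : V → V ⧸ L) '' (V' : Set V) =
        (QuotientAddGroup.mk : V → V ⧸ L) ''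
          (V'.subtype '' closure (ZSpan.fundamentalDomain bR)) := by
      apply Set.Subset.antisymm
      · rintro - ⟨x, hx, rfl⟩
        set x' : ↥V' := ⟨x, hx⟩ with hx'def
        set y := ZSpan.fract bR x' with hydef
        have hyF : y ∈ ZSpan.fundamentalDomain bR := ZSpan.fract_mem_fundamentalDomain bR x'
        have hfl : x' - y ∈ Λ := by
          have hmem : x' - y ∈ Submodule.span ℤ (Set.range ⇑bR) := by
            rw [hydef, ZSpan.fract_apply, sub_sub_cancel]
            exact SetLike.coe_mem _
          exact b'.ofZLatticeBasis_span ℝ ▸ hmem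
        have hsub : x - (y : V) ∈ L := hfl
        refine ⟨(y : V), ⟨y, subset_closure hyF, rfl⟩, ?_⟩
        exact (QuotientAddGroup.eq_iff_sub_mem.mpr hsub).symm
      · rintro - ⟨-, ⟨y, -, rfl⟩, rfl⟩
        exact ⟨(y : V), y.2, rfl⟩
    rw [hEq]
    exact hCc.image continuous_quotient_mk'
end

section
/- Let L be a lattice in a finite-dimensional real vector space V, let H be a finite group of linear automorphisms of V preserving L, and let V' be an H-invariant L-subspace of V. Then there exists an H-invariant L-subspace V'' of V such that V = V' ⊕ V''. -/
theorem stmt8 {V : Type*} [AddCommGroup V] [Module ℝ V] [FiniteDimensional ℝ V]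
    (L : AddSubgroup V)
    (hL : ∃ b : Module.Basis (Fin (Module.finrank ℝ V)) ℝ V,
      L = AddSubgroup.closure (Set.range ⇑b))
    (H : Subgroup (V ≃ₗ[ℝ] V)) (hfin : Finite H)
    (hHL : ∀ A ∈ H, ⇑A '' (L : Set V) = (L : Set V))
    (V' : Submodule ℝ V)
    (hV'L : V' = Submodule.span ℝ ((L : Set V) ∩ (V' : Set V)))
    (hV'H : ∀ A ∈ H, Submodule.map A.toLinearMap V' = V') :
    ∃ V'' : Submodule ℝ V,
      V'' = Submodule.span ℝ ((L : Set V) ∩ (V'' : Set V)) ∧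
      (∀ A ∈ H, Submodule.map A.toLinearMap V'' = V'') ∧
      IsCompl V' V'' := by
  classical
  obtain ⟨b, hLb⟩ := hL
  -- ℚ-module structure on V
  letI : Module ℚ V := Module.compHom V (Rat.castHom ℝ)
  haveI : IsScalarTower ℚ ℝ V := ⟨fun q r x => by
    show ((q • r) : ℝ) • x = (q : ℝ) • r • x
    rw [Rat.smul_def, smul_smul]⟩
  have qsmul_def : ∀ (q : ℚ) (x : V), q • x = (q : ℝ) • x := fun q x => rfl
  -- the ℚ-rational points
  set Vq : Submodule ℚ V := Submodule.span ℚ (Set.range ⇑b) with hVq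
  have hbL : ∀ i, b i ∈ L := fun i => by
    rw [hLb]; exact AddSubgroup.subset_closure (Set.mem_range_self i)
  have hLQ : (L : Set V) ⊆ (Vq : Set V) := by
    rw [hLb]
    intro x hx
    refine AddSubgroup.closure_le (Vq.toAddSubgroup) |>.2 (fun y hy => ?_) hx
    exact Submodule.subset_span hy
  -- clearing denominators
  have hclear : ∀ x ∈ Vq, ∃ m : ℕ, 0 < m ∧ (m : ℤ) • x ∈ L := by
    intro x hx
    induction hx using Submodule.span_induction with
    | mem x h =>
      obtain ⟨i, rfl⟩ := h
      exact ⟨1, one_pos, by simpa using hbL i⟩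
    | zero => exact ⟨1, one_pos, by simpa using L.zero_mem⟩
    | add x y hx hy ihx ihy =>
      obtain ⟨m, hm, hmx⟩ := ihx
      obtain ⟨k, hk, hky⟩ := ihy
      refine ⟨m * k, Nat.mul_pos hm hk, ?_⟩
      have : ((m * k : ℕ) : ℤ) • (x + y)
          = (k : ℤ) • ((m : ℤ) • x) + (m : ℤ) • ((k : ℤ) • y) := by
        rw [smul_add, smul_smul, smul_smul]
        push_cast
        ring_nf
      rw [this]
      exact L.add_mem (L.zsmul_mem hmx _) (L.zsmul_mem hky _)
    | smul q x hx ih =>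
      obtain ⟨m, hm, hmx⟩ := ih
      refine ⟨q.den * m, Nat.mul_pos q.pos hm, ?_⟩
      have key : ((q.den * m : ℕ) : ℤ) • (q • x) = q.num • ((m : ℤ) • x) := by
        rw [qsmul_def, ← Int.cast_smul_eq_zsmul ℝ ((q.den * m : ℕ) : ℤ),
          ← Int.cast_smul_eq_zsmul ℝ q.num, ← Int.cast_smul_eq_zsmul ℝ (m : ℤ),
          smul_smul, smul_smul]
        congr 1
        have hq : (q : ℝ) * (q.den : ℝ) = (q.num : ℝ) := by
          exact_mod_cast congrArg (fun r : ℚ => (r : ℝ)) (Rat.mul_den_eq_num q)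
        push_cast
        linear_combination (m : ℝ) * hq
      rw [key]
      exact L.zsmul_mem hmx _
  -- H preserves L pointwise and Vq
  have hLmem : ∀ A ∈ H, ∀ x ∈ (L : Set V), A x ∈ (L : Set V) := by
    intro A hA x hx
    rw [← hHL A hA]
    exact ⟨x, hx, rfl⟩
  have hAQ : ∀ A ∈ H, ∀ x ∈ Vq, A x ∈ Vq := by
    intro A hA x hx
    induction hx using Submodule.span_induction with
    | mem x h =>
      obtain ⟨i, rfl⟩ := h
      exact hLQ (hLmem A hA _ (hbL i))
    | zero => simpa using Vq.zero_mem
    | add x y hx hy ihx ihy => rw [map_add]; exact Vq.add_mem ihx ihy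
    | smul q x hx ih =>
      rw [qsmul_def, map_smul, ← qsmul_def]
      exact Vq.smul_mem q ih
  have hV'mem : ∀ A ∈ H, ∀ x ∈ V', A x ∈ V' := by
    intro A hA x hx
    rw [← hV'H A hA]
    exact ⟨x, hx, rfl⟩
  -- choose a basis s of V' inside L, extend to a basis u of V by lattice vectors
  obtain ⟨s, hsSub, hsSpan, hsInd⟩ :=
    exists_linearIndependent ℝ ((L : Set V) ∩ (V' : Set V))
  have hsSpanV' : Submodule.span ℝ s = V' := by rw [hsSpan, ← hV'L]
  have hsub : s ⊆ s ∪ Set.range ⇑b := Set.subset_union_left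
  set u : Set V := (show LinearIndepOn ℝ id s from hsInd).extend hsub with hu
  have hu_sub : u ⊆ s ∪ Set.range ⇑b := (show LinearIndepOn ℝ id s from hsInd).extend_subset hsub
  have hs_u : s ⊆ u := (show LinearIndepOn ℝ id s from hsInd).subset_extend hsub
  have hu_ind : LinearIndependent ℝ (Subtype.val : u → V) :=
    (show LinearIndepOn ℝ id s from hsInd).linearIndepOn_extend hsub
  have hu_span : Submodule.span ℝ u = ⊤ := by
    rw [eq_top_iff, ← b.span_eq]
    refine Submodule.span_le.2 ?_
    intro x hx
    exact (show LinearIndepOn ℝ id s from hsInd).subset_span_extend hsub (Set.mem_union_right _ hx)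
  have hu_fin : u.Finite := hu_ind.setFinite
  haveI : Fintype u := hu_fin.fintype
  have e : Module.Basis u ℝ V := Module.Basis.mk hu_ind (by rw [Subtype.range_coe, hu_span])
  have hcard_u : Fintype.card u = Module.finrank ℝ V := (Module.finrank_eq_card_basis e).symm
  -- u consists of rational points
  have hu_Q : u ⊆ (Vq : Set V) := by
    intro x hx
    rcases hu_sub hx with h | h
    · exact hLQ (hsSub h).1
    · exact Submodule.subset_span h
  -- the complement V₀ spanned by u \ s, and the projection π onto V' along V₀
  set V₀ : Submodule ℝ V := Submodule.span ℝ (u \ s) with hV₀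
  have hcompl : IsCompl V' V₀ := by
    constructor
    · rw [disjoint_iff, ← hsSpanV']
      have hdisj : Disjoint {x : u | (x : V) ∈ s} {x : u | (x : V) ∈ s}ᶜ :=
        disjoint_compl_right
      have h1 : Subtype.val '' {x : u | (x : V) ∈ s} = s := by
        ext y; constructor
        · rintro ⟨⟨y, hy⟩, hys, rfl⟩; exact hys
        · intro hy; exact ⟨⟨y, hs_u hy⟩, hy, rfl⟩
      have h2 : Subtype.val '' {x : u | (x : V) ∈ s}ᶜ = u \ s := by
        ext y; constructor
        · rintro ⟨⟨y, hy⟩, hys, rfl⟩; exact ⟨hy, hys⟩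
        · rintro ⟨hyu, hys⟩; exact ⟨⟨y, hyu⟩, hys, rfl⟩
      have := hu_ind.disjoint_span_image hdisj
      rw [h1, h2] at this
      exact disjoint_iff.1 this
    · rw [codisjoint_iff, ← hsSpanV', hV₀, ← Submodule.span_union,
        Set.union_diff_cancel hs_u, hu_span]
  set π : V →ₗ[ℝ] V := V'.subtype.comp (V'.projectionOnto V₀ hcompl) with hπ
  have hπmem : ∀ x, π x ∈ V' := fun x => (V'.projectionOnto V₀ hcompl x).2
  have hπV' : ∀ x ∈ V', π x = x := by
    intro x hx
    show (V'.projectionOnto V₀ hcompl x : V) = x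
    rw [show x = ((⟨x, hx⟩ : V') : V) from rfl,
      Submodule.linearProjOfIsCompl_apply_left hcompl]
  have hπV₀ : ∀ x ∈ V₀, π x = 0 := by
    intro x hx
    show (V'.projectionOnto V₀ hcompl x : V) = 0
    rw [show x = ((⟨x, hx⟩ : V₀) : V) from rfl,
      Submodule.linearProjOfIsCompl_apply_right hcompl]
    rfl
  -- π is rational: Vq = span ℚ u, and π maps u into Vq
  have hu_indQ : LinearIndependent ℚ (Subtype.val : u → V) :=
    hu_ind.restrict_scalars (by
      intro p q h
      simpa using (Rat.cast_injective (α := ℝ)) (by simpa [Rat.smul_def] using h))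
  haveI : FiniteDimensional ℚ Vq :=
    FiniteDimensional.span_of_finite ℚ (Set.finite_range ⇑b)
  have hspan_u_Q : Submodule.span ℚ u = Vq := by
    have hle : Submodule.span ℚ u ≤ Vq := Submodule.span_le.2 hu_Q
    refine Submodule.eq_of_le_of_finrank_eq hle ?_
    have hb_indQ : LinearIndependent ℚ (Subtype.val : Set.range ⇑b → V) :=
      (show LinearIndependent ℝ (Subtype.val : Set.range ⇑b → V) from b.linearIndependent.linearIndepOn_id).restrict_scalars (by
        intro p q h
        simpa using (Rat.cast_injective (α := ℝ)) (by simpa [Rat.smul_def] using h))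
    have h1 : Module.finrank ℚ (Submodule.span ℚ u) = Fintype.card u := by
      rw [finrank_span_set_eq_card hu_indQ, Set.toFinset_card]
    have h2 : Module.finrank ℚ Vq = Module.finrank ℝ V := by
      rw [hVq, finrank_span_set_eq_card hb_indQ, Set.toFinset_card,
        Set.card_range_of_injective b.injective, Fintype.card_fin]
    rw [h1, h2, hcard_u]
  have hπQ : ∀ x ∈ Vq, π x ∈ Vq := by
    intro x hx
    rw [← hspan_u_Q] at hx
    induction hx using Submodule.span_induction with
    | mem x h =>
      by_cases hxs : x ∈ s
      · rw [hπV' x (hsSpanV' ▸ Submodule.subset_span hxs)]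
        exact hu_Q h
      · rw [hπV₀ x (Submodule.subset_span ⟨h, hxs⟩)]
        exact Vq.zero_mem
    | zero => simpa using Vq.zero_mem
    | add x y hx hy ihx ihy => rw [map_add]; exact Vq.add_mem ihx ihy
    | smul q x hx ih =>
      rw [qsmul_def, map_smul, ← qsmul_def]
      exact Vq.smul_mem q ih
  -- average over H
  haveI : Fintype H := Fintype.ofFinite H
  set N : ℕ := Fintype.card H with hN
  have hNpos : 0 < N := Fintype.card_pos
  set k : ℝ := (N : ℝ)⁻¹ with hk
  set p : V →ₗ[ℝ] V := k • ∑ A : H,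
    ((A : V ≃ₗ[ℝ] V).toLinearMap.comp
      (π.comp ((A : V ≃ₗ[ℝ] V)⁻¹.toLinearMap))) with hp
  have hp_apply : ∀ x, p x = k • ∑ A : H,
      (A : V ≃ₗ[ℝ] V) (π ((A : V ≃ₗ[ℝ] V)⁻¹ x)) := by
    intro x
    rw [hp, LinearMap.smul_apply, LinearMap.sum_apply]
    rfl
  have hinv_mem : ∀ A : H, ((A : V ≃ₗ[ℝ] V)⁻¹) ∈ H := fun A => by
    have := (A⁻¹ : H).2
    simpa using this
  have hpV' : ∀ x, p x ∈ V' := by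
    intro x
    rw [hp_apply]
    refine V'.smul_mem k (Submodule.sum_mem _ fun A _ => ?_)
    exact hV'mem _ A.2 _ (hπmem _)
  have hpfix : ∀ x ∈ V', p x = x := by
    intro x hx
    rw [hp_apply]
    have : ∀ A : H, (A : V ≃ₗ[ℝ] V) (π ((A : V ≃ₗ[ℝ] V)⁻¹ x)) = x := by
      intro A
      have h1 : ((A : V ≃ₗ[ℝ] V)⁻¹ x) ∈ V' := hV'mem _ (hinv_mem A) _ hx
      rw [hπV' _ h1]
      show ((A : V ≃ₗ[ℝ] V) * (A : V ≃ₗ[ℝ] V)⁻¹) x = x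
      rw [mul_inv_cancel]
      rfl
    rw [Finset.sum_congr rfl (fun A _ => this A), Finset.sum_const,
      Finset.card_univ, ← hN, ← Nat.cast_smul_eq_nsmul ℝ, smul_smul, hk,
      inv_mul_cancel₀ (by exact_mod_cast hNpos.ne'), one_smul]
  have hpcomm : ∀ B : H, ∀ x, p ((B : V ≃ₗ[ℝ] V) x) = (B : V ≃ₗ[ℝ] V) (p x) := by
    intro B x
    rw [hp_apply, hp_apply, map_smul, map_sum]
    congr 1
    have key : ∀ A : H, ((B * A : H) : V ≃ₗ[ℝ] V) (π ((((B * A : H) : V ≃ₗ[ℝ] V))⁻¹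
        ((B : V ≃ₗ[ℝ] V) x))) = (B : V ≃ₗ[ℝ] V) ((A : V ≃ₗ[ℝ] V) (π ((A : V ≃ₗ[ℝ] V)⁻¹ x))) := by
      intro A
      have hc : ((B * A : H) : V ≃ₗ[ℝ] V) = (B : V ≃ₗ[ℝ] V) * (A : V ≃ₗ[ℝ] V) := rfl
      rw [hc, mul_inv_rev]
      have h1 : ((A : V ≃ₗ[ℝ] V)⁻¹ * (B : V ≃ₗ[ℝ] V)⁻¹) ((B : V ≃ₗ[ℝ] V) x)
          = (A : V ≃ₗ[ℝ] V)⁻¹ x := by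
        show ((A : V ≃ₗ[ℝ] V)⁻¹ * ((B : V ≃ₗ[ℝ] V)⁻¹ * (B : V ≃ₗ[ℝ] V))) x
          = (A : V ≃ₗ[ℝ] V)⁻¹ x
        rw [inv_mul_cancel, mul_one]
      rw [h1]
      rfl
    refine (Fintype.sum_equiv (Equiv.mulLeft B) _ _ ?_).symm
    intro A
    exact (key A).symm
  have hpQ : ∀ x ∈ Vq, p x ∈ Vq := by
    intro x hx
    rw [hp_apply]
    have hsum : (∑ A : H, (A : V ≃ₗ[ℝ] V) (π ((A : V ≃ₗ[ℝ] V)⁻¹ x))) ∈ Vq := by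
      refine Submodule.sum_mem _ fun A _ => ?_
      exact hAQ _ A.2 _ (hπQ _ (hAQ _ (hinv_mem A) _ hx))
    have : k • (∑ A : H, (A : V ≃ₗ[ℝ] V) (π ((A : V ≃ₗ[ℝ] V)⁻¹ x)))
        = ((N : ℚ)⁻¹ : ℚ) • (∑ A : H, (A : V ≃ₗ[ℝ] V) (π ((A : V ≃ₗ[ℝ] V)⁻¹ x))) := by
      rw [qsmul_def]
      norm_num [hk]
    rw [this]
    exact Vq.smul_mem _ hsum
  -- the complement
  refine ⟨LinearMap.ker p, ?_, ?_, ?_⟩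
  · -- rationality
    have hgen : ∀ i, b i - p (b i) ∈ LinearMap.ker p := by
      intro i
      rw [LinearMap.mem_ker, map_sub, hpfix _ (hpV' (b i)), sub_self]
    have hker_le : LinearMap.ker p ≤
        Submodule.span ℝ ((L : Set V) ∩ (LinearMap.ker p : Set V)) := by
      intro x hxker
      have hx : x ∈ Submodule.span ℝ (Set.range ⇑b) := by rw [b.span_eq]; trivial
      have key : x - p x ∈ Submodule.span ℝ ((L : Set V) ∩ (LinearMap.ker p : Set V)) := by
        clear hxker
        induction hx using Submodule.span_induction with
        | mem y h =>
          obtain ⟨i, rfl⟩ := h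
          -- b i - p (b i) is rational and in ker p; clear denominators
          have hQ : b i - p (b i) ∈ Vq :=
            Vq.sub_mem (hLQ (hbL i)) (hpQ _ (hLQ (hbL i)))
          obtain ⟨m, hm, hmL⟩ := hclear _ hQ
          have hmker : (m : ℤ) • (b i - p (b i)) ∈ LinearMap.ker p :=
            zsmul_mem (hgen i) _
          have hmem : (m : ℤ) • (b i - p (b i)) ∈
              Submodule.span ℝ ((L : Set V) ∩ (LinearMap.ker p : Set V)) :=
            Submodule.subset_span ⟨hmL, hmker⟩
          have : b i - p (b i) = ((m : ℝ))⁻¹ • ((m : ℤ) • (b i - p (b i))) := by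
            rw [← Int.cast_smul_eq_zsmul ℝ, smul_smul]
            push_cast
            rw [inv_mul_cancel₀ (by exact_mod_cast hm.ne'), one_smul]
          rw [this]
          exact Submodule.smul_mem _ _ hmem
        | zero => simp
        | add y z hy hz ihy ihz =>
          have : y + z - p (y + z) = (y - p y) + (z - p z) := by
            rw [map_add]; abel
          rw [this]
          exact Submodule.add_mem _ ihy ihz
        | smul a y hy ih =>
          have : a • y - p (a • y) = a • (y - p y) := by
            rw [map_smul, smul_sub]
          rw [this]
          exact Submodule.smul_mem _ _ ih
      rwa [LinearMap.mem_ker.1 hxker, sub_zero] at key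
    refine le_antisymm hker_le ?_
    refine Submodule.span_le.2 ?_
    exact fun x hx => hx.2
  · -- H-invariance
    intro A hA
    set A' : H := ⟨A, hA⟩ with hA'
    have hAA : ((A' : V ≃ₗ[ℝ] V) * (A' : V ≃ₗ[ℝ] V)⁻¹) = 1 := mul_inv_cancel _
    apply le_antisymm
    · rintro _ ⟨x, hx, rfl⟩
      have hx0 : p x = 0 := hx
      show p ((A' : V ≃ₗ[ℝ] V) x) = 0
      rw [hpcomm A' x, hx0, map_zero]
    · intro y hy
      have hy0 : p y = 0 := hy
      refine ⟨(A' : V ≃ₗ[ℝ] V)⁻¹ y, ?_, ?_⟩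
      · have h2 : (A' : V ≃ₗ[ℝ] V) ((A' : V ≃ₗ[ℝ] V)⁻¹ y) = y := by
          show ((A' : V ≃ₗ[ℝ] V) * (A' : V ≃ₗ[ℝ] V)⁻¹) y = y
          rw [hAA]; rfl
        have h3 : (A' : V ≃ₗ[ℝ] V) (p ((A' : V ≃ₗ[ℝ] V)⁻¹ y)) = 0 := by
          rw [← hpcomm A', h2, hy0]
        show p ((A' : V ≃ₗ[ℝ] V)⁻¹ y) = 0
        exact (LinearEquiv.map_eq_zero_iff _).1 h3
      · show (A' : V ≃ₗ[ℝ] V) ((A' : V ≃ₗ[ℝ] V)⁻¹ y) = y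
        show ((A' : V ≃ₗ[ℝ] V) * (A' : V ≃ₗ[ℝ] V)⁻¹) y = y
        rw [hAA]; rfl
  · -- IsCompl
    have hcompl' : IsCompl V' (LinearMap.ker (LinearMap.codRestrict V' p hpV')) :=
      LinearMap.isCompl_of_proj (fun x => Subtype.ext (hpfix x x.2))
    rwa [LinearMap.ker_codRestrict] at hcompl'
end

section
/- Let L be a lattice in a finite-dimensional real vector space V and V' an L-subspace of V. Then there exists an open subset U' of V containing V', which is a union of cosets of V', such that L ∩ U' = L ∩ V'. -/
open Metric Submodule Bornology

theorem stmt11 {V : Type*} [NormedAddCommGroup V] [NormedSpace ℝ V] [FiniteDimensional ℝ V]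
    (L : AddSubgroup V)
    (hL : ∃ b : Module.Basis (Fin (Module.finrank ℝ V)) ℝ V,
      L = AddSubgroup.closure (Set.range ⇑b))
    (V' : Submodule ℝ V)
    (hV' : V' = Submodule.span ℝ ((L : Set V) ∩ (V' : Set V))) :
    ∃ U' : Set V, IsOpen U' ∧ (V' : Set V) ⊆ U' ∧
      (∀ x ∈ U', ∀ v ∈ V', x + v ∈ U') ∧
      (L : Set V) ∩ U' = (L : Set V) ∩ (V' : Set V) := by
  obtain ⟨b, hb⟩ := hL
  -- identify L with the ℤ-span of b
  have hb' : L = (Submodule.span ℤ (Set.range ⇑b)).toAddSubgroup := by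
    rw [hb, Submodule.span_int_eq_addSubgroupClosure]
  subst hb'
  set Lz : Submodule ℤ V := Submodule.span ℤ (Set.range ⇑b) with hLz
  have hLset : (Lz.toAddSubgroup : Set V) = (Lz : Set V) := rfl
  haveI : DiscreteTopology Lz := inferInstance
  have hLclosed : IsClosed (Lz : Set V) := by
    have := AddSubgroup.isClosed_of_discrete (H := Lz.toAddSubgroup)
    exact this
  -- V' is closed
  have hV'closed : IsClosed (V' : Set V) := Submodule.closed_of_finiteDimensional V'
  -- translation invariance of infDist to V'
  have htrans : ∀ (x : V), ∀ w ∈ V',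
      infDist (x + w) (V' : Set V) = infDist x (V' : Set V) := by
    intro x w hw
    have hiso : Isometry (fun y : V => y + w) := Isometry.of_dist_eq fun a c => dist_add_right a c w
    have himg : (fun y : V => y + w) '' (V' : Set V) = (V' : Set V) := by
      ext y
      simp only [Set.mem_image, SetLike.mem_coe]
      constructor
      · rintro ⟨z, hz, rfl⟩; exact V'.add_mem hz hw
      · intro hy; exact ⟨y - w, V'.sub_mem hy hw, by abel⟩
    conv_lhs => rw [← himg]
    exact infDist_image hiso
  -- the lattice inside V'
  set N : Submodule ℤ V' := Submodule.span ℤ {x : V' | (x : V) ∈ Lz} with hN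
  have hNL : ∀ x : V', x ∈ N → (x : V) ∈ Lz := by
    intro x hx
    have : N ≤ Submodule.comap (V'.subtype.restrictScalars ℤ) Lz :=
      Submodule.span_le.mpr fun y hy => hy
    exact this hx
  -- N is discrete
  haveI : DiscreteTopology N := by
    let f : N → Lz := fun x => ⟨((x : V') : V), hNL (x : V') x.2⟩
    have hfc : Continuous f :=
      Continuous.subtype_mk (continuous_subtype_val.comp continuous_subtype_val) _
    have hfi : Function.Injective f := by
      intro x y h
      have h' : (f x).1 = (f y).1 := congrArg Subtype.val h
      exact Subtype.ext (Subtype.ext h')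
    exact DiscreteTopology.of_continuous_injective hfc hfi
  -- N spans V' over ℝ
  haveI : IsZLattice ℝ N := by
    constructor
    rw [hN, Submodule.span_span_of_tower]
    apply Submodule.map_injective_of_injective V'.injective_subtype
    rw [Submodule.map_span, Submodule.map_top, Submodule.range_subtype]
    have himg : V'.subtype '' {x : V' | (x : V) ∈ Lz} = (Lz : Set V) ∩ (V' : Set V) := by
      ext y
      simp only [Set.mem_image, Set.mem_setOf_eq, Set.mem_inter_iff, SetLike.mem_coe]
      constructor
      · rintro ⟨z, hz, rfl⟩; exact ⟨hz, z.2⟩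
      · rintro ⟨h1, h2⟩; exact ⟨⟨y, h2⟩, h1, rfl⟩
    rw [himg]
    exact hV'.symm
  haveI : Module.Finite ℤ N := ZLattice.module_finite ℝ N
  haveI : Module.Free ℤ N := ZLattice.module_free ℝ N
  -- a ℝ-basis of V' coming from a ℤ-basis of N
  let c := (Module.Free.chooseBasis ℤ N).ofZLatticeBasis ℝ N
  have hcspan : Submodule.span ℤ (Set.range ⇑c) = N := Module.Basis.ofZLatticeBasis_span ℝ N _
  obtain ⟨C, hC⟩ : ∃ C : ℝ, ∀ x ∈ ZSpan.fundamentalDomain c, ‖x‖ ≤ C :=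
    (ZSpan.fundamentalDomain_isBounded c).exists_norm_le
  -- the finite set of "bad" lattice points near 0
  set S : Set V := (Metric.closedBall (0 : V) (C + 1) ∩ (Lz : Set V)) \ (V' : Set V) with hS
  have hSfin : S.Finite := by
    apply Set.Finite.subset (s := Metric.closedBall (0 : V) (C + 1) ∩ (Lz : Set V))
    · exact Metric.finite_isBounded_inter_isClosed DiscreteTopology.isDiscrete Metric.isBounded_closedBall hLclosed
    · exact Set.diff_subset
  have hSpos : ∀ s ∈ S, 0 < infDist s (V' : Set V) := by
    intro s hs
    rcases (lt_or_eq_of_le (infDist_nonneg (x := s) (s := (V' : Set V)))) with h | h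
    · exact h
    · exfalso
      have : s ∈ closure (V' : Set V) :=
        (mem_closure_iff_infDist_zero ⟨0, V'.zero_mem⟩).mpr h.symm
      rw [hV'closed.closure_eq] at this
      exact hs.2 this
  -- choose ε
  set t : Finset ℝ := insert (1 : ℝ) (hSfin.toFinset.image (fun s => infDist s (V' : Set V)))
    with ht
  have htne : t.Nonempty := ⟨1, Finset.mem_insert_self _ _⟩
  set ε := t.min' htne with hε
  have hε1 : ε ≤ 1 := Finset.min'_le _ _ (Finset.mem_insert_self _ _)
  have hεpos : 0 < ε := by
    have hmem := t.min'_mem htne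
    rcases Finset.mem_insert.mp hmem with h | h
    · show (0:ℝ) < t.min' htne
      rw [h]; norm_num
    · obtain ⟨s, hs, hse⟩ := Finset.mem_image.mp h
      show (0:ℝ) < t.min' htne
      rw [← hse]
      exact hSpos s (hSfin.mem_toFinset.mp hs)
  have hεS : ∀ s ∈ S, ε ≤ infDist s (V' : Set V) := by
    intro s hs
    apply Finset.min'_le
    exact Finset.mem_insert_of_mem
      (Finset.mem_image_of_mem _ (hSfin.mem_toFinset.mpr hs))
  -- key claim
  have hkey : ∀ ℓ ∈ Lz, infDist ℓ (V' : Set V) < ε → ℓ ∈ V' := by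
    intro ℓ hℓ hlt
    by_contra hnot
    obtain ⟨v, hv, hdv⟩ := (infDist_lt_iff ⟨0, V'.zero_mem⟩).mp (lt_of_lt_of_le hlt hε1)
    -- decompose v using the fundamental domain
    obtain ⟨ν, hν, -⟩ := ZSpan.exist_unique_vadd_mem_fundamentalDomain c (⟨v, hv⟩ : V')
    have hνN : ((ν : V') : V) ∈ Lz := by
      apply hNL
      exact (le_of_eq hcspan) ν.2
    set s : V := ℓ + ((ν : V') : V) with hsdef
    have hsL : s ∈ Lz := Lz.add_mem hℓ hνN
    have hsV' : s ∉ V' := by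
      intro h
      apply hnot
      have : ℓ = s - ((ν : V') : V) := by rw [hsdef]; abel
      rw [this]
      exact V'.sub_mem h (ν : V').2
    have hf : ‖((ν : V') : V) + v‖ ≤ C := by
      have h2 := hC _ hν
      have h3 : (((ν +ᵥ (⟨v, hv⟩ : V')) : V') : V) = ((ν : V') : V) + v := rfl
      have h4 : ‖((ν +ᵥ (⟨v, hv⟩ : V')) : V')‖ = ‖(((ν +ᵥ (⟨v, hv⟩ : V')) : V') : V)‖ := rfl
      rw [h4, h3] at h2
      exact h2
    have hsball : s ∈ Metric.closedBall (0 : V) (C + 1) := by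
      rw [Metric.mem_closedBall, dist_zero_right]
      have : s = (ℓ - v) + (((ν : V') : V) + v) := by rw [hsdef]; abel
      rw [this]
      calc ‖(ℓ - v) + (((ν : V') : V) + v)‖
          ≤ ‖ℓ - v‖ + ‖((ν : V') : V) + v‖ := norm_add_le _ _
        _ ≤ 1 + C := by
            apply add_le_add _ hf
            rw [← dist_eq_norm]; exact le_of_lt hdv
        _ = C + 1 := by ring
    have hsS : s ∈ S := ⟨⟨hsball, hsL⟩, hsV'⟩
    have : ε ≤ infDist s (V' : Set V) := hεS s hsS
    rw [hsdef, htrans ℓ _ (ν : V').2] at this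
    exact absurd hlt (not_lt.mpr this)
  -- conclude
  refine ⟨{x : V | infDist x (V' : Set V) < ε}, ?_, ?_, ?_, ?_⟩
  · exact isOpen_lt (continuous_infDist_pt _) continuous_const
  · intro x hx
    simp only [Set.mem_setOf_eq]
    rw [infDist_zero_of_mem hx]
    exact hεpos
  · intro x hx v hv
    simp only [Set.mem_setOf_eq] at hx ⊢
    rwa [htrans x v hv]
  · ext x
    simp only [Set.mem_inter_iff, Set.mem_setOf_eq, SetLike.mem_coe]
    constructor
    · rintro ⟨h1, h2⟩
      have h1' : x ∈ Lz := h1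
      exact ⟨h1, hkey x h1' h2⟩
    · rintro ⟨h1, h2⟩
      refine ⟨h1, ?_⟩
      rw [infDist_zero_of_mem h2]
      exact hεpos
end
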